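/- Let ν₀ < ν₁ be coprime positive integers, let 2 ≤ k ≤ ⌊ν₀/2⌋, and set λ₁ = (ν₀−k+1)·ν₁ − (k−1)·ν₀. Let Γ = ⟨ν₀, ν₁⟩ = { a·ν₀ + b·ν₁ : a, b ∈ ℕ } be the numerical semigroup generated by ν₀ and ν₁. Then every integer n > (ν₁−k+1)·ν₀ belongs to (Γ + ν₀) ∪ (Γ + ν₁) ∪ (Γ + λ₁). -/

import Mathlib

/-- Every integer `n > (ν₁-k+1)ν₀` lies in `(Γ+ν₀) ∪ (Γ+ν₁) ∪ (Γ+lam1)`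
where `Γ = ⟨ν₀,ν₁⟩` and `lam1 = (ν₀-k+1)ν₁ - (k-1)ν₀`. -/
theorem mem_shifted_semigroup (ν₀ ν₁ k : ℕ) (h01 : ν₀ < ν₁)
    (hcop : Nat.Coprime ν₀ ν₁) (hk2 : 2 ≤ k) (hk : 2 * k ≤ ν₀) (n : ℤ)
    (hn : n > ((ν₁ : ℤ) - k + 1) * ν₀) :
    letI Γ : Set ℤ := {m | ∃ a b : ℕ, m = (a : ℤ) * ν₀ + (b : ℤ) * ν₁}
    letI lam1 : ℤ := ((ν₀ : ℤ) - k + 1) * ν₁ - ((k : ℤ) - 1) * ν₀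
    n - (ν₀ : ℤ) ∈ Γ ∨ n - (ν₁ : ℤ) ∈ Γ ∨ n - lam1 ∈ Γ := by
  simp only [Set.mem_setOf_eq]
  have hν₀pos : (0:ℤ) < (ν₀:ℤ) := by
    have : 4 ≤ ν₀ := by omega
    exact_mod_cast by omega
  have h01' : (ν₀:ℤ) < ν₁ := by exact_mod_cast h01
  have hcopZ : IsCoprime (ν₀:ℤ) (ν₁:ℤ) := by
    rw [Int.isCoprime_iff_gcd_eq_one]
    exact_mod_cast hcop
  obtain ⟨u, v, huv⟩ := hcopZ
  -- write n = β*ν₀ + α*ν₁ with 0 ≤ α < ν₀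
  set α : ℤ := (v * n) % (ν₀:ℤ) with hαdef
  set β : ℤ := u * n + ((v * n) / (ν₀:ℤ)) * ν₁ with hβdef
  have hα0 : 0 ≤ α := Int.emod_nonneg _ (by omega)
  have hαlt : α < (ν₀:ℤ) := Int.emod_lt_of_pos _ hν₀pos
  have hdm : (v * n) = ((v * n) / (ν₀:ℤ)) * ν₀ + α := by
    rw [hαdef]; exact (Int.ediv_mul_add_emod _ _).symm
  have hdecomp : n = β * ν₀ + α * ν₁ := by
    have h1 : (u * (ν₀:ℤ) + v * ν₁) * n = n := by rw [huv]; ring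
    calc n = (u * (ν₀:ℤ) + v * ν₁) * n := h1.symm
      _ = u * n * ν₀ + (v * n) * ν₁ := by ring
      _ = u * n * ν₀ + (((v * n) / (ν₀:ℤ)) * ν₀ + α) * ν₁ := by rw [← hdm]
      _ = β * ν₀ + α * ν₁ := by rw [hβdef]; ring
  have hkZ : (2:ℤ) ≤ k := by exact_mod_cast hk2
  have hkν₀ : 2 * (k:ℤ) ≤ ν₀ := by exact_mod_cast hk
  rcases lt_trichotomy β 0 with hβ | hβ | hβ
  · -- β < 0 : third case
    right; right
    -- α ≥ ν₀ - k + 1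
    have hαge : (ν₀:ℤ) - k + 1 ≤ α := by
      by_contra h
      push_neg at h
      have : n ≤ ((ν₀:ℤ) - k) * ν₁ - ν₀ := by
        have hα' : α ≤ (ν₀:ℤ) - k := by omega
        have hβ' : β ≤ -1 := by omega
        calc n = β * ν₀ + α * ν₁ := hdecomp
          _ ≤ (-1) * ν₀ + ((ν₀:ℤ) - k) * ν₁ := by
              have h1 : β * ν₀ ≤ (-1) * ν₀ := by
                apply mul_le_mul_of_nonneg_right hβ' (le_of_lt hν₀pos)
              have h2 : α * ν₁ ≤ ((ν₀:ℤ) - k) * ν₁ := by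
                apply mul_le_mul_of_nonneg_right hα' (by omega)
              omega
          _ = ((ν₀:ℤ) - k) * ν₁ - ν₀ := by ring
      nlinarith
    -- β ≥ 1 - k
    have hβge : 1 - (k:ℤ) ≤ β := by
      by_contra h
      push_neg at h
      have hβ' : β ≤ -(k:ℤ) := by omega
      have hα' : α ≤ (ν₀:ℤ) - 1 := by omega
      have : n ≤ ((ν₀:ℤ) - 1) * ν₁ - k * ν₀ := by
        calc n = β * ν₀ + α * ν₁ := hdecomp
          _ ≤ (-(k:ℤ)) * ν₀ + ((ν₀:ℤ) - 1) * ν₁ := by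
              have h1 : β * ν₀ ≤ (-(k:ℤ)) * ν₀ :=
                mul_le_mul_of_nonneg_right hβ' (le_of_lt hν₀pos)
              have h2 : α * ν₁ ≤ ((ν₀:ℤ) - 1) * ν₁ :=
                mul_le_mul_of_nonneg_right hα' (by omega)
              omega
          _ = ((ν₀:ℤ) - 1) * ν₁ - k * ν₀ := by ring
      nlinarith
    refine ⟨(β + k - 1).toNat, (α - ((ν₀:ℤ) - k + 1)).toNat, ?_⟩
    have e1 : ((β + k - 1).toNat : ℤ) = β + k - 1 := Int.toNat_of_nonneg (by omega)
    have e2 : ((α - ((ν₀:ℤ) - k + 1)).toNat : ℤ) = α - ((ν₀:ℤ) - k + 1) :=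
      Int.toNat_of_nonneg (by omega)
    rw [e1, e2, hdecomp]; ring
  · -- β = 0 : n = α ν₁, α ≥ 1, second case
    right; left
    have hα1 : 1 ≤ α := by
      by_contra h
      push_neg at h
      have hα0' : α = 0 := by omega
      rw [hdecomp, hβ, hα0'] at hn
      nlinarith
    exact ⟨0, (α - 1).toNat, by
      have e : (((α - 1).toNat : ℤ)) = α - 1 := Int.toNat_of_nonneg (by omega)
      rw [e, hdecomp, hβ]; push_cast; ring⟩
  · -- β ≥ 1 : first case
    left
    exact ⟨(β - 1).toNat, α.toNat, by
      have e1 : ((β - 1).toNat : ℤ) = β - 1 := Int.toNat_of_nonneg (by omega)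
      have e2 : ((α.toNat : ℤ)) = α := Int.toNat_of_nonneg hα0
      rw [e1, e2, hdecomp]; ring⟩
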